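/- For any tree T with n > 2 vertices, Toucher has a strategy in the Toucher-Isolator game on T which guarantees that the number of untouched vertices at the end of the game is at most (n − 1)/2. In particular, u(T) ≤ (n−1)/2. -/

import Mathlib

namespace ToucherIsolator

/-- A strategy for a player in the Toucher-Isolator game: given the history of
previously claimed edges (most recent first), it produces the next edge to claim. -/
def Strategy (V : Type*) : Type _ := List (Sym2 V) → Sym2 V

variable {V : Type*}

/-- The number of edges of `G`. -/
noncomputable def edgeCard (G : SimpleGraph V) : ℕ := Nat.card G.edgeSet

/-- `history turn t i n` is the list of the first `n` claimed edges (most recent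
first) when the player moving at step `m` is Toucher iff `turn m = true`,
Toucher plays strategy `t` and Isolator plays strategy `i`. -/
def history (turn : ℕ → Bool) (t i : Strategy V) : ℕ → List (Sym2 V)
  | 0 => []
  | n + 1 =>
      (if turn n then t (history turn t i n) else i (history turn t i n))
        :: history turn t i n

/-- The edge claimed at step `n` of the game. -/
def moveAt (turn : ℕ → Bool) (t i : Strategy V) (n : ℕ) : Sym2 V :=
  if turn n then t (history turn t i n) else i (history turn t i n)

/-- A strategy is legal on `G` if, whenever the history so far consists of
distinct edges of `G` and some edge of `G` is still unclaimed, it claims a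
previously unclaimed edge of `G`. -/
def Legal (G : SimpleGraph V) (s : Strategy V) : Prop :=
  ∀ h : List (Sym2 V), h.Nodup → (∀ e ∈ h, e ∈ G.edgeSet) →
    h.length < edgeCard G → s h ∈ G.edgeSet ∧ s h ∉ h

/-- The set of vertices untouched at the end of the game, i.e. incident to no
edge claimed by Toucher during the `edgeCard G` moves of the game. -/
def untouchedSet (G : SimpleGraph V) (turn : ℕ → Bool) (t i : Strategy V) : Set V :=
  { v | ∀ n < edgeCard G, turn n = true → v ∉ moveAt turn t i n }

/-- The number of untouched vertices at the end of the game. -/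
noncomputable def untouchedCount (G : SimpleGraph V) (turn : ℕ → Bool)
    (t i : Strategy V) : ℕ :=
  Nat.card (untouchedSet G turn t i)

/-- The standard turn order: Toucher moves first and the players alternate. -/
def std (n : ℕ) : Bool := n % 2 = 0

end ToucherIsolator

open ToucherIsolator SimpleGraph

section Aux

variable {V : Type*}

lemma history_succ (turn : ℕ → Bool) (t i : Strategy V) (n : ℕ) :
    history turn t i (n + 1) = moveAt turn t i n :: history turn t i n := rfl

lemma history_length (turn : ℕ → Bool) (t i : Strategy V) :
    ∀ n, (history turn t i n).length = n := by
  intro n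
  induction n with
  | zero => rfl
  | succ n ih => rw [history_succ, List.length_cons, ih]

lemma mem_history_iff (turn : ℕ → Bool) (t i : Strategy V) (n : ℕ) (e : Sym2 V) :
    e ∈ history turn t i n ↔ ∃ k, k < n ∧ moveAt turn t i k = e := by
  induction n with
  | zero => simp [history]
  | succ n ih =>
    rw [history_succ, List.mem_cons, ih]
    constructor
    · rintro (h | ⟨k, hk, hke⟩)
      · exact ⟨n, Nat.lt_succ_self n, h.symm⟩
      · exact ⟨k, Nat.lt_succ_of_lt hk, hke⟩
    · rintro ⟨k, hk, hke⟩
      rcases Nat.lt_succ_iff_lt_or_eq.mp hk with h | h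
      · exact Or.inr ⟨k, h, hke⟩
      · exact Or.inl (by rw [← hke, h])

lemma history_spec {G : SimpleGraph V} {turn : ℕ → Bool} {t i : Strategy V}
    (ht : Legal G t) (hi : Legal G i) :
    ∀ n, n ≤ edgeCard G →
      (history turn t i n).Nodup ∧ ∀ e ∈ history turn t i n, e ∈ G.edgeSet := by
  intro n
  induction n with
  | zero => intro _; exact ⟨List.nodup_nil, by simp [history]⟩
  | succ n ih =>
    intro hle
    have hlt : n < edgeCard G := Nat.lt_of_succ_le hle
    obtain ⟨hnd, hmem⟩ := ih (Nat.le_of_lt hlt)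
    have hlen : (history turn t i n).length < edgeCard G := by
      rw [history_length]; exact hlt
    have hmove : moveAt turn t i n ∈ G.edgeSet ∧ moveAt turn t i n ∉ history turn t i n := by
      unfold moveAt
      by_cases h : turn n
      · simp only [h, if_true]; exact ht _ hnd hmem hlen
      · simp only [h, if_false]; exact hi _ hnd hmem hlen
    rw [history_succ]
    refine ⟨List.nodup_cons.mpr ⟨hmove.2, hnd⟩, ?_⟩
    intro e he
    rcases List.mem_cons.mp he with h | h
    · rw [h]; exact hmove.1
    · exact hmem e h

lemma moveAt_spec {G : SimpleGraph V} {turn : ℕ → Bool} {t i : Strategy V}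
    (ht : Legal G t) (hi : Legal G i) {n : ℕ} (hn : n < edgeCard G) :
    moveAt turn t i n ∈ G.edgeSet ∧ moveAt turn t i n ∉ history turn t i n := by
  obtain ⟨hnd, hmem⟩ := history_spec ht hi (n + 1) hn
  rw [history_succ] at hnd hmem
  exact ⟨hmem _ List.mem_cons_self, (List.nodup_cons.mp hnd).1⟩

lemma moveAt_injOn {G : SimpleGraph V} {turn : ℕ → Bool} {t i : Strategy V}
    (ht : Legal G t) (hi : Legal G i) {j k : ℕ} (hj : j < edgeCard G)
    (hk : k < edgeCard G) (h : moveAt turn t i j = moveAt turn t i k) : j = k := by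
  by_contra hne
  rcases Nat.lt_or_ge j k with hlt | hge
  · exact (moveAt_spec ht hi hk).2 (by
      rw [mem_history_iff]; exact ⟨j, hlt, h⟩)
  · have hlt : k < j := lt_of_le_of_ne hge fun h' => hne h'.symm
    exact (moveAt_spec ht hi hj).2 (by
      rw [mem_history_iff]; exact ⟨k, hlt, h.symm⟩)

lemma moveAt_surj [Fintype V] {G : SimpleGraph V} {turn : ℕ → Bool} {t i : Strategy V}
    (ht : Legal G t) (hi : Legal G i) {e : Sym2 V} (he : e ∈ G.edgeSet) :
    ∃ k, k < edgeCard G ∧ moveAt turn t i k = e := by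
  classical
  rw [← mem_history_iff (n := edgeCard G)]
  obtain ⟨hnd, hmem⟩ := history_spec ht hi (edgeCard G) le_rfl
  set L := history turn t i (edgeCard G) with hL
  have hsub : L.toFinset ⊆ G.edgeFinset := by
    intro x hx
    rw [List.mem_toFinset] at hx
    rw [SimpleGraph.mem_edgeFinset]
    exact hmem x hx
  have hcardL : L.toFinset.card = edgeCard G := by
    rw [List.toFinset_card_of_nodup hnd, hL, history_length]
  have hcardE : G.edgeFinset.card = edgeCard G := by
    rw [SimpleGraph.edgeFinset_card, edgeCard, Nat.card_eq_fintype_card]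
  have heq : L.toFinset = G.edgeFinset :=
    Finset.eq_of_subset_of_card_le hsub (by rw [hcardL, hcardE])
  rw [← List.mem_toFinset, heq]
  exact SimpleGraph.mem_edgeFinset.mpr he

/-- In a tree, for any fixed vertex `w`, every vertex `u ≠ w` can be injectively
assigned an edge containing it (the first edge on the path from `u` to `w`). -/
lemma tree_first_edge {T : SimpleGraph V} (hT : T.IsTree) (w : V) :
    ∃ f : V → Sym2 V, (∀ u, u ≠ w → u ∈ f u ∧ f u ∈ T.edgeSet) ∧
      ∀ u u', u ≠ w → u' ≠ w → f u = f u' → u = u' := by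
  classical
  have hpath : ∀ u : V, ∃ p : T.Walk u w, p.IsPath ∧ ∀ q : T.Walk u w, q.IsPath → q = p := by
    intro u
    obtain ⟨p, hp, hu⟩ := hT.existsUnique_path u w
    exact ⟨p, hp, hu⟩
  choose p hp hup using hpath
  refine ⟨fun u => s(u, (p u).getVert 1), ?_, ?_⟩
  · intro u hu
    refine ⟨Sym2.mem_mk_left _ _, ?_⟩
    rw [SimpleGraph.mem_edgeSet]
    exact SimpleGraph.Walk.adj_snd (SimpleGraph.Walk.not_nil_of_ne hu)
  · intro u u' hu hu' hf
    rcases Sym2.eq_iff.mp hf with ⟨h1, _⟩ | ⟨h1, h2⟩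
    · exact h1
    -- h1 : u = (p u').getVert 1, h2 : (p u).getVert 1 = u'
    rcases hq : p u with _ | ⟨hadj, q⟩
    · exact absurd rfl hu
    · -- p u = cons hadj q
      rw [hq] at h2
      rw [SimpleGraph.Walk.getVert_cons_succ, SimpleGraph.Walk.getVert_zero] at h2
      have h2' := h2.symm
      subst h2'
      have hpu := hp u
      rw [hq] at hpu
      obtain ⟨hqpath, hunotin⟩ := (SimpleGraph.Walk.cons_isPath_iff _ _).mp hpu
      have hqe : q = p u' := hup u' q hqpath
      rw [← hqe] at h1
      rcases hr : q with _ | ⟨hadj', r⟩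
      · rw [hr] at h1
        simpa using h1
      · rw [hr] at h1
        rw [SimpleGraph.Walk.getVert_cons_succ, SimpleGraph.Walk.getVert_zero] at h1
        subst h1
        exfalso
        apply hunotin
        rw [hr, SimpleGraph.Walk.support_cons]
        exact List.mem_cons_of_mem _ (SimpleGraph.Walk.start_mem_support r)

lemma card_odd_filter (m : ℕ) :
    ((Finset.range m).filter (fun k => k % 2 = 1)).card = m / 2 := by
  induction m with
  | zero => simp
  | succ m ih =>
    rw [Finset.range_add_one, Finset.filter_insert]
    by_cases h : m % 2 = 1
    · rw [if_pos h, Finset.card_insert_of_notMem (by simp), ih]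
      omega
    · rw [if_neg h, ih]
      omega

end Aux

/-- Theorem 7 (upper bound): on a tree with `n > 2` vertices, Toucher can
guarantee at most `(n - 1)/2` untouched vertices. -/
theorem toucher_guarantee_tree
    {V : Type*} [Fintype V] (T : SimpleGraph V) (hT : T.IsTree)
    (hn : 2 < Fintype.card V) :
    ∃ t : Strategy V, Legal T t ∧ ∀ i : Strategy V, Legal T i →
      (untouchedCount T std t i : ℝ) ≤ ((Fintype.card V : ℝ) - 1) / 2 := by
  classical
  have hV : Nonempty V := Fintype.card_pos_iff.mp (by omega)
  obtain ⟨v0⟩ := hV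
  set t : Strategy V := fun h =>
    if H : ∃ e, e ∈ T.edgeSet ∧ e ∉ h then H.choose else s(v0, v0) with ht_def
  have ht : Legal T t := by
    intro h hnd hmem hlen
    have H : ∃ e, e ∈ T.edgeSet ∧ e ∉ h := by
      by_contra hcon
      push_neg at hcon
      have hsub : T.edgeFinset ⊆ h.toFinset := by
        intro x hx
        rw [List.mem_toFinset]
        exact hcon x (SimpleGraph.mem_edgeFinset.mp hx)
      have h1 : T.edgeFinset.card ≤ h.toFinset.card := Finset.card_le_card hsub
      have h2 : h.toFinset.card ≤ h.length := h.toFinset_card_le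
      have h3 : T.edgeFinset.card = edgeCard T := by
        rw [SimpleGraph.edgeFinset_card, edgeCard, Nat.card_eq_fintype_card]
      omega
    rw [ht_def]
    simp only [dif_pos H]
    exact H.choose_spec
  refine ⟨t, ht, ?_⟩
  intro i hi
  -- the edge count of the tree
  have hm : edgeCard T = Fintype.card V - 1 := by
    have := hT.card_edgeFinset
    rw [edgeCard, Nat.card_eq_fintype_card, ← SimpleGraph.edgeFinset_card]
    omega
  have hmpos : 0 < edgeCard T := by omega
  -- a vertex touched by Toucher's first move
  set w : V := (moveAt std t i 0).out.1 with hw_def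
  have hw_mem : w ∈ moveAt std t i 0 := Sym2.out_fst_mem _
  set U : Set V := untouchedSet T std t i with hU_def
  have hw : w ∉ U := by
    intro hwU
    exact hwU 0 hmpos rfl hw_mem
  have hne : ∀ u ∈ U, u ≠ w := fun u hu h => hw (h ▸ hu)
  obtain ⟨f, hf1, hf2⟩ := tree_first_edge hT w
  -- every edge incident to an untouched vertex was claimed by Isolator
  have hstep : ∀ u ∈ U, ∃ k, k < edgeCard T ∧ std k = false ∧ moveAt std t i k = f u := by
    intro u hu
    obtain ⟨humem, huedge⟩ := hf1 u (hne u hu)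
    obtain ⟨k, hk, hke⟩ := moveAt_surj ht hi huedge
    refine ⟨k, hk, ?_, hke⟩
    cases hstd : std k with
    | false => rfl
    | true => exact absurd (hke ▸ humem) (hu k hk hstd)
  set g : V → ℕ := fun u => if hu : u ∈ U then (hstep u hu).choose else 0 with hg_def
  have hg : ∀ u (hu : u ∈ U), g u < edgeCard T ∧ std (g u) = false ∧
      moveAt std t i (g u) = f u := by
    intro u hu
    rw [hg_def]
    simp only [dif_pos hu]
    exact (hstep u hu).choose_spec
  -- counting
  have hUfin : U.Finite := Set.toFinite U
  have hcard : untouchedCount T std t i = hUfin.toFinset.card := by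
    rw [untouchedCount, Nat.card_coe_set_eq, Set.ncard_eq_toFinset_card _ hUfin]
  have hinj : Set.InjOn g hUfin.toFinset := by
    intro u hu u' hu' hgu
    simp only [Finset.mem_coe, Set.Finite.mem_toFinset] at hu hu'
    have h1 := (hg u hu).2.2
    have h2 := (hg u' hu').2.2
    rw [hgu, h2] at h1
    exact hf2 u u' (hne u hu) (hne u' hu') h1.symm
  have hmaps : ∀ u ∈ hUfin.toFinset, g u ∈
      (Finset.range (edgeCard T)).filter (fun k => k % 2 = 1) := by
    intro u hu
    rw [Set.Finite.mem_toFinset] at hu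
    obtain ⟨h1, h2, _⟩ := hg u hu
    rw [Finset.mem_filter, Finset.mem_range]
    refine ⟨h1, ?_⟩
    simp only [std, decide_eq_false_iff_not] at h2
    omega
  have hle : hUfin.toFinset.card ≤
      ((Finset.range (edgeCard T)).filter (fun k => k % 2 = 1)).card :=
    Finset.card_le_card_of_injOn g hmaps hinj
  rw [card_odd_filter] at hle
  -- conclude
  have hfinal : untouchedCount T std t i ≤ (Fintype.card V - 1) / 2 := by
    rw [hcard, ← hm]
    exact hle
  have hcast : ((Fintype.card V - 1 : ℕ) : ℝ) = (Fintype.card V : ℝ) - 1 := by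
    have : 1 ≤ Fintype.card V := by omega
    push_cast [this]
    ring
  calc (untouchedCount T std t i : ℝ)
      ≤ (((Fintype.card V - 1) / 2 : ℕ) : ℝ) := by exact_mod_cast hfinal
    _ ≤ ((Fintype.card V - 1 : ℕ) : ℝ) / 2 := Nat.cast_div_le
    _ = ((Fintype.card V : ℝ) - 1) / 2 := by rw [hcast]
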